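/- arXiv:2502.12424 — 3 statements merged into one kernel-verified Lean document; each statement's English description precedes it below -/
import Mathlib

section
/- Let φ_j(z) be the polynomials defined by the generating function Σ_{j=0}^∞ φ_j(z) ε^j = exp(z ε + Σ_{i≥1, (n+1)∤i} κ_i ε^i), where κ_i = z₀^i/i for a fixed nonzero complex number z₀ and all indices i not divisible by n+1. Then for every j ≥ 0, φ_j(0) = (Σ_{i=0}^{⌊j/(n+1)⌋} f_i) z₀^j, where the numbers f_i are defined by Σ_{i=0}^∞ f_i ε^{i(n+1)} = exp(−Σ_{j=1}^∞ ε^{j(n+1)}/(j(n+1))). -/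
open PowerSeries Finset

/-- The exponential of a formal power series with zero constant coefficient,
defined coefficientwise by `exp S = Σ_k S^k / k!`. -/
noncomputable def expPS (S : PowerSeries ℂ) : PowerSeries ℂ :=
  PowerSeries.mk fun j =>
    ∑ k ∈ Finset.range (j + 1), PowerSeries.coeff j (S ^ k) / (k.factorial : ℂ)

/- ------------------ auxiliary lemmas ------------------- -/

lemma coeff_expPS (S : PowerSeries ℂ) (j : ℕ) :
    coeff j (expPS S) = ∑ k ∈ range (j + 1), coeff j (S ^ k) / (k.factorial : ℂ) := by
  simp [expPS]

lemma coeff_pow_eq_zero' {S : PowerSeries ℂ} (hS : constantCoeff S = 0)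
    {j k : ℕ} (h : j < k) : coeff j (S ^ k) = 0 := by
  have hX : (X : PowerSeries ℂ) ^ k ∣ S ^ k :=
    pow_dvd_pow_of_dvd (X_dvd_iff.mpr hS) k
  exact (X_pow_dvd_iff.mp hX) j h

/-- finite partial sums of the exponential -/
noncomputable def expPt (S : PowerSeries ℂ) (N : ℕ) : PowerSeries ℂ :=
  ∑ k ∈ range N, ((k.factorial : ℂ))⁻¹ • S ^ k

lemma coeff_expPt (S : PowerSeries ℂ) (N j : ℕ) :
    coeff j (expPt S N) = ∑ k ∈ range N, coeff j (S ^ k) / (k.factorial : ℂ) := by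
  simp [expPt, div_eq_inv_mul, smul_eq_mul]

lemma coeff_expPS_eq_expPt {S : PowerSeries ℂ} (hS : constantCoeff S = 0)
    {N j : ℕ} (h : j + 1 ≤ N) : coeff j (expPS S) = coeff j (expPt S N) := by
  rw [coeff_expPS, coeff_expPt]
  apply Finset.sum_subset (Finset.range_subset_range.mpr h)
  intro k hk hk'
  rw [coeff_pow_eq_zero' hS (by simp only [mem_range] at hk' ⊢; omega), zero_div]

lemma derivative_expPt (S : PowerSeries ℂ) (N : ℕ) :
    derivative ℂ (expPt S (N + 1)) = derivative ℂ S * expPt S N := by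
  unfold expPt
  rw [map_sum, Finset.sum_range_succ']
  have h0 : derivative ℂ (((Nat.factorial 0 : ℂ))⁻¹ • S ^ 0) = 0 := by simp
  rw [h0, add_zero, Finset.mul_sum]
  apply Finset.sum_congr rfl
  intro i _
  rw [Derivation.map_smul, Derivation.leibniz_pow, Nat.add_sub_cancel, nsmul_eq_mul,
    smul_eq_mul, PowerSeries.smul_eq_C_mul, PowerSeries.smul_eq_C_mul,
    ← map_natCast (PowerSeries.C) (i + 1), ← mul_assoc, ← map_mul]
  have key : (((i + 1).factorial : ℂ))⁻¹ * (((i + 1 : ℕ)) : ℂ) = ((i.factorial : ℂ))⁻¹ := by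
    have hfne : ((i.factorial : ℂ)) ≠ 0 := Nat.cast_ne_zero.mpr i.factorial_ne_zero
    have hine : ((i : ℂ) + 1) ≠ 0 := Nat.cast_add_one_ne_zero i
    rw [Nat.factorial_succ]
    push_cast
    rw [mul_inv]
    field_simp
  rw [key]
  ring

lemma coeff_mul_congr {P Q Q' : PowerSeries ℂ} {j : ℕ}
    (h : ∀ b ≤ j, coeff b Q = coeff b Q') :
    coeff j (P * Q) = coeff j (P * Q') := by
  rw [coeff_mul, coeff_mul]
  apply Finset.sum_congr rfl
  intro p hp
  rw [Finset.HasAntidiagonal.mem_antidiagonal] at hp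
  rw [h p.2 (by omega)]

lemma derivative_expPS {S : PowerSeries ℂ} (hS : constantCoeff S = 0) :
    derivative ℂ (expPS S) = derivative ℂ S * expPS S := by
  ext j
  rw [coeff_derivative, coeff_expPS_eq_expPt hS (show j + 1 + 1 ≤ j + 2 by omega),
    ← coeff_derivative, derivative_expPt]
  exact coeff_mul_congr fun b hb => (coeff_expPS_eq_expPt hS (by omega)).symm

lemma constantCoeff_expPS (S : PowerSeries ℂ) : constantCoeff (expPS S) = 1 := by
  rw [← coeff_zero_eq_constantCoeff_apply]
  simp [expPS]

lemma ode_unique {S G H : PowerSeries ℂ}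
    (hG : derivative ℂ G = S * G) (hH : derivative ℂ H = S * H)
    (h0 : constantCoeff G = constantCoeff H) : G = H := by
  ext j
  induction j using Nat.strong_induction_on with
  | _ j ih =>
    match j with
    | 0 => simpa using h0
    | j + 1 =>
      have h1 : coeff (j + 1) G * ((j : ℂ) + 1) = coeff (j + 1) H * ((j : ℂ) + 1) := by
        have e1 := coeff_derivative G j
        have e2 := coeff_derivative H j
        rw [hG] at e1; rw [hH] at e2
        push_cast at e1 e2 ⊢
        rw [← e1, ← e2, coeff_mul, coeff_mul]
        apply Finset.sum_congr rfl
        intro p hp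
        rw [Finset.HasAntidiagonal.mem_antidiagonal] at hp
        rw [ih p.2 (by omega)]
      have hne : ((j : ℂ) + 1) ≠ 0 := Nat.cast_add_one_ne_zero j
      exact mul_right_cancel₀ hne h1

lemma rescale_expPS (c : ℂ) (S : PowerSeries ℂ) :
    rescale c (expPS S) = expPS (rescale c S) := by
  ext j
  rw [coeff_rescale, coeff_expPS, coeff_expPS, Finset.mul_sum]
  apply Finset.sum_congr rfl
  intro k _
  rw [← map_pow, coeff_rescale, mul_div_assoc]

lemma support_mul' {d : ℕ} {S T : PowerSeries ℂ}
    (hS : ∀ m, ¬ d ∣ m → coeff m S = 0) (hT : ∀ m, ¬ d ∣ m → coeff m T = 0) :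
    ∀ m, ¬ d ∣ m → coeff m (S * T) = 0 := by
  intro m hm
  rw [coeff_mul]
  apply Finset.sum_eq_zero
  intro p hp
  rw [Finset.HasAntidiagonal.mem_antidiagonal] at hp
  by_cases h1 : d ∣ p.1
  · have h2 : ¬ d ∣ p.2 := fun h2 => hm (hp ▸ dvd_add h1 h2)
    rw [hT _ h2, mul_zero]
  · rw [hS _ h1, zero_mul]

lemma support_pow' {d : ℕ} {S : PowerSeries ℂ}
    (hS : ∀ m, ¬ d ∣ m → coeff m S = 0) (k : ℕ) :
    ∀ m, ¬ d ∣ m → coeff m (S ^ k) = 0 := by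
  induction k with
  | zero =>
      intro m hm
      have hm0 : m ≠ 0 := fun h => hm (h ▸ dvd_zero d)
      rw [pow_zero, coeff_one, if_neg hm0]
  | succ k ih =>
      rw [pow_succ]
      exact support_mul' ih hS

lemma support_expPS {d : ℕ} {S : PowerSeries ℂ}
    (hS : ∀ m, ¬ d ∣ m → coeff m S = 0) :
    ∀ m, ¬ d ∣ m → coeff m (expPS S) = 0 := by
  intro m hm
  rw [coeff_expPS]
  exact Finset.sum_eq_zero fun k _ => by rw [support_pow' hS k m hm, zero_div]

theorem phi_constant_term (n : ℕ) (hn : 1 ≤ n) (z₀ : ℂ) (hz₀ : z₀ ≠ 0)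
    (Φ F : PowerSeries ℂ)
    (hΦ : Φ = expPS (PowerSeries.mk fun i =>
      if i ≠ 0 ∧ ¬ (n + 1) ∣ i then z₀ ^ i / (i : ℂ) else 0))
    (hF : F = expPS (PowerSeries.mk fun m =>
      if m ≠ 0 ∧ (n + 1) ∣ m then -(1 : ℂ) / (m : ℂ) else 0))
    (f : ℕ → ℂ) (hf : ∀ i, f i = PowerSeries.coeff (i * (n + 1)) F) :
    ∀ j : ℕ, PowerSeries.coeff j Φ =
      (∑ i ∈ Finset.range (j / (n + 1) + 1), f i) * z₀ ^ j := by
  set d := n + 1 with hd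
  have hd0 : d ≠ 0 := by omega
  -- the various auxiliary series
  set SΦ : PowerSeries ℂ :=
    PowerSeries.mk (fun i => if i ≠ 0 ∧ ¬ d ∣ i then z₀ ^ i / (i : ℂ) else 0) with hSΦ
  set Cs : PowerSeries ℂ :=
    PowerSeries.mk (fun m => if m ≠ 0 ∧ d ∣ m then -(1 : ℂ) / (m : ℂ) else 0) with hCs
  set A : PowerSeries ℂ :=
    PowerSeries.mk (fun i => if i ≠ 0 then z₀ ^ i / (i : ℂ) else 0) with hA
  set B : PowerSeries ℂ := rescale z₀ Cs with hB
  set G : PowerSeries ℂ := PowerSeries.mk (fun j => z₀ ^ j) with hG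
  set H : PowerSeries ℂ := expPS B with hH
  -- constant coefficient facts
  have hSΦ0 : constantCoeff SΦ = 0 := by
    rw [← coeff_zero_eq_constantCoeff_apply, hSΦ, coeff_mk]; simp
  have hA0 : constantCoeff A = 0 := by
    rw [← coeff_zero_eq_constantCoeff_apply, hA, coeff_mk]; simp
  have hB0 : constantCoeff B = 0 := by
    rw [← coeff_zero_eq_constantCoeff_apply, hB, coeff_rescale, hCs, coeff_mk]; simp
  -- SΦ = A + B
  have hsum : SΦ = A + B := by
    ext i
    rw [map_add, hSΦ, hA, coeff_mk, coeff_mk, hB, coeff_rescale, hCs, coeff_mk]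
    rcases eq_or_ne i 0 with h0 | h0
    · subst h0; simp
    · by_cases hdi : d ∣ i
      · rw [if_neg (by tauto), if_pos h0, if_pos ⟨h0, hdi⟩]
        field_simp
        ring
      · rw [if_pos ⟨h0, hdi⟩, if_pos h0, if_neg (by tauto)]
        ring
  -- derivative of A
  have hdA : derivative ℂ A = PowerSeries.mk (fun j => z₀ ^ (j + 1)) := by
    ext j
    rw [coeff_derivative, hA, coeff_mk, coeff_mk, if_pos (Nat.succ_ne_zero j)]
    have : ((j : ℂ) + 1) ≠ 0 := Nat.cast_add_one_ne_zero j
    push_cast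
    field_simp
  -- G = expPS A by the ODE
  have hGd : derivative ℂ G = derivative ℂ A * G := by
    rw [hdA]
    ext j
    rw [coeff_derivative, coeff_mul]
    simp only [coeff_mk, hG]
    rw [Finset.Nat.sum_antidiagonal_eq_sum_range_succ
      (fun a b => z₀ ^ (a + 1) * z₀ ^ b)]
    have : ∀ k ∈ range (j + 1), z₀ ^ (k + 1) * z₀ ^ (j - k) = z₀ ^ (j + 1) := by
      intro k hk
      rw [mem_range] at hk
      rw [← pow_add]
      congr 1
      omega
    rw [Finset.sum_congr rfl this, Finset.sum_const, card_range, nsmul_eq_mul]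
    push_cast
    ring
  have hGeq : G = expPS A :=
    ode_unique hGd (derivative_expPS hA0)
      (by rw [constantCoeff_expPS, ← coeff_zero_eq_constantCoeff_apply, hG, coeff_mk, pow_zero])
  -- Φ = G * H
  have hΦGH : Φ = G * H := by
    apply ode_unique (S := derivative ℂ SΦ)
    · rw [hΦ]; exact derivative_expPS hSΦ0
    · have hHd : derivative ℂ H = derivative ℂ B * H := derivative_expPS hB0
      have hGd' : derivative ℂ G = derivative ℂ A * G := hGd
      rw [Derivation.leibniz, hHd, hGd', hsum, map_add, smul_eq_mul, smul_eq_mul]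
      ring
    · rw [hΦ, constantCoeff_expPS, map_mul, hH, constantCoeff_expPS,
        ← coeff_zero_eq_constantCoeff_apply, hG, coeff_mk, pow_zero, one_mul]
  -- coefficients of H
  have hCsupp : ∀ m, ¬ d ∣ m → coeff m Cs = 0 := by
    intro m hm
    rw [hCs, coeff_mk, if_neg (by tauto)]
  have hHcoeff : ∀ m : ℕ, coeff m H =
      if d ∣ m then f (m / d) * z₀ ^ m else 0 := by
    intro m
    have : H = rescale z₀ F := by
      rw [hH, hB, ← rescale_expPS, hF, hCs]
    rw [this, coeff_rescale]
    by_cases hdm : d ∣ m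
    · rw [if_pos hdm, hf (m / d), Nat.div_mul_cancel hdm]
      ring
    · rw [if_neg hdm, hF, support_expPS hCsupp m hdm, mul_zero]
  -- final computation
  intro j
  rw [hΦGH, mul_comm G H, coeff_mul,
    Finset.Nat.sum_antidiagonal_eq_sum_range_succ
      (fun a b => coeff a H * coeff b G)]
  simp only [hG, coeff_mk]
  have step1 : ∀ b ∈ range (j + 1),
      coeff b H * z₀ ^ (j - b) = if d ∣ b then f (b / d) * z₀ ^ j else 0 := by
    intro b hb
    rw [mem_range] at hb
    rw [hHcoeff b]
    split_ifs with h
    · rw [mul_assoc, ← pow_add]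
      congr 2
      omega
    · rw [zero_mul]
  rw [Finset.sum_congr rfl step1, Finset.sum_ite, Finset.sum_const, smul_zero, add_zero]
  rw [Finset.sum_mul]
  apply Finset.sum_nbij' (fun b => b / d) (fun i => i * d)
  · intro b hb
    simp only [mem_filter, mem_range] at hb
    rw [mem_range]
    have := Nat.div_le_div_right (c := d) (Nat.lt_succ_iff.mp hb.1)
    omega
  · intro i hi
    rw [mem_range] at hi
    simp only [mem_filter, mem_range]
    constructor
    · have h1 : i * d ≤ (j / d) * d := Nat.mul_le_mul_right d (by omega)
      have h2 : (j / d) * d ≤ j := Nat.div_mul_le_self j d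
      omega
    · exact dvd_mul_left d i
  · intro b hb
    simp only [mem_filter] at hb
    exact Nat.div_mul_cancel hb.2
  · intro i _
    exact Nat.mul_div_cancel i (by omega)
  · intro b _
    rfl
end

section
/- The GMAM polynomial W_{[2,0]}(z) for n = 2 equals z⁴ + 4κ_{1,1}z³ + (6κ_{1,1}² + 4κ_{1,2})z² + (4κ_{1,1}³ + 8κ_{1,1}κ_{1,2})z + κ_{1,1}⁴ + 4κ_{1,2}κ_{1,1}² − 4κ_{1,2}² − 8κ_{1,4}. -/
/-- the GMAM polynomial `W_{[2,0]}(z)` for `n = 2`, i.e. the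
monic normalization `8·(φ_{1,1}(z) φ'_{1,4}(z) − φ'_{1,1}(z) φ_{1,4}(z))` of
the Wronskian of `φ_{1,1}` and `φ_{1,4}` (coefficients of
`exp(zε + κ_{1,1}ε + κ_{1,2}ε² + κ_{1,4}ε⁴ + …)`), equals
`z⁴ + 4κ_{1,1}z³ + (6κ_{1,1}² + 4κ_{1,2})z² + (4κ_{1,1}³ + 8κ_{1,1}κ_{1,2})z
 + κ_{1,1}⁴ + 4κ_{1,2}κ_{1,1}² − 4κ_{1,2}² − 8κ_{1,4}`. -/
theorem gmam_W20 (κ1 κ2 κ4 : ℂ) (φ1 φ4 : ℂ → ℂ)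
    (h1 : ∀ z, φ1 z = z + κ1)
    (h4 : ∀ z, φ4 z = (z + κ1) ^ 4 / 24 + κ2 * (z + κ1) ^ 2 / 2
      + κ2 ^ 2 / 2 + κ4) :
    ∀ z : ℂ,
      8 * (φ1 z * deriv φ4 z - deriv φ1 z * φ4 z)
        = z ^ 4 + 4 * κ1 * z ^ 3 + (6 * κ1 ^ 2 + 4 * κ2) * z ^ 2
          + (4 * κ1 ^ 3 + 8 * κ1 * κ2) * z
          + κ1 ^ 4 + 4 * κ2 * κ1 ^ 2 - 4 * κ2 ^ 2 - 8 * κ4 := by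
  intro z
  have e1 : φ1 = fun z => z + κ1 := funext h1
  have e4 : φ4 = fun z => (z + κ1) ^ 4 / 24 + κ2 * (z + κ1) ^ 2 / 2
      + κ2 ^ 2 / 2 + κ4 := funext h4
  have d1 : deriv φ1 z = 1 := by
    rw [e1]
    simp
  have d4 : deriv φ4 z = 4 * (z + κ1) ^ 3 / 24 + κ2 * (2 * (z + κ1)) / 2 := by
    rw [e4]
    have : HasDerivAt (fun z : ℂ => (z + κ1) ^ 4 / 24 + κ2 * (z + κ1) ^ 2 / 2
        + κ2 ^ 2 / 2 + κ4) (4 * (z + κ1) ^ 3 / 24 + κ2 * (2 * (z + κ1)) / 2) z := by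
      have hz : HasDerivAt (fun z : ℂ => z + κ1) 1 z :=
        (hasDerivAt_id z).add_const κ1
      have h4' : HasDerivAt (fun z : ℂ => (z + κ1) ^ 4) (4 * (z + κ1) ^ 3 * 1) z := by
        simpa using (hz.fun_pow 4)
      have h2' : HasDerivAt (fun z : ℂ => (z + κ1) ^ 2) (2 * (z + κ1) ^ 1 * 1) z := by
        simpa using (hz.fun_pow 2)
      have := ((h4'.div_const 24).fun_add ((h2'.const_mul κ2).div_const 2)).add_const
        (κ2 ^ 2 / 2)
      have := this.add_const κ4
      exact this.congr_deriv (by ring)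
    exact this.deriv
  rw [d1, d4, h1, h4]
  ring
end

section
/- Let n ≥ 1, λ₀ ∈ ℂ with Im(λ₀) ≠ 0, and set a_k = (2Im(λ₀)/(n+1))·csc(kπ/(n+1)) and b_k = (2Im(λ₀)/(n+1))·cot(kπ/(n+1)) − 2Re(λ₀) for 1 ≤ k ≤ n, and χ₀ = 2Re(λ₀) + 2i Im(λ₀)/(n+1). Then the polynomial P(χ) = (χ − 2λ₀ − Σ_{k=1}^n a_k²/(χ + b_k)) · Π_{k=1}^n (χ + b_k) satisfies P(χ) = (χ − χ₀)^{n+1}; in particular χ₀ is a root of multiplicity n+1 of the characteristic equation P(χ) = 0. -/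
open Finset Real

open Polynomial
noncomputable def zet (m : ℕ) : ℂ := Complex.exp (2 * Real.pi * Complex.I / m)

lemma aux_poly (m : ℕ) (hm : 0 < m) :
    (X ^ m - 1 : ℂ[X]) = ∏ j ∈ Finset.range m, (X - C ((zet m) ^ j)) := by
  have h := X_pow_sub_C_eq_prod (Complex.isPrimitiveRoot_exp m hm.ne') hm (one_pow m)
  simpa [zet] using h

lemma aux_pointwise (m : ℕ) (hm : 0 < m) (x : ℂ) :
    x ^ m - 1 = ∏ j ∈ Finset.range m, (x - (zet m) ^ j) := by
  have h := congrArg (Polynomial.eval x) (aux_poly m hm)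
  simpa [Polynomial.eval_prod] using h

lemma aux_AB (m : ℕ) (hm : 0 < m) (A B : ℂ) :
    ∏ j ∈ Finset.range m, (B + A * (zet m) ^ j) = B ^ m - (-A) ^ m := by
  rcases eq_or_ne A 0 with rfl | hA
  · simp [zero_pow hm.ne']
  · have h := aux_pointwise m hm (-B / A)
    have h2 : (-A) ^ m * ((-B / A) ^ m - 1) = ∏ j ∈ Finset.range m, (B + A * (zet m) ^ j) := by
      rw [h, ← Finset.card_range m, ← Finset.prod_const (-A), Finset.card_range,
        ← Finset.prod_mul_distrib]
      refine Finset.prod_congr rfl fun j _ => ?_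
      field_simp
      ring
    rw [← h2]
    have hpm : ((-1 : ℂ)) ^ (m * 2) = 1 := by
      rw [mul_comm, pow_mul]; simp
    field_simp
    ring_nf
    rw [hpm]
    have hAA : A ^ m * A⁻¹ ^ m = 1 := by rw [← mul_pow, mul_inv_cancel₀ hA, one_pow]
    linear_combination B ^ m * hAA

lemma aux_geom (n : ℕ) :
    ∏ k ∈ Finset.range n, (1 - (zet (n+1)) ^ (k+1)) = ((n : ℂ) + 1) := by
  have hpoly : (∏ k ∈ Finset.range n, (X - C ((zet (n+1)) ^ (k+1)))) * (X - 1)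
      = (∑ i ∈ Finset.range (n+1), (X : ℂ[X]) ^ i) * (X - 1) := by
    rw [geom_sum_mul]
    have h := aux_poly (n+1) n.succ_pos
    rw [Finset.prod_range_succ'] at h
    simpa using h.symm
  have hc : (∏ k ∈ Finset.range n, ((X : ℂ[X]) - C ((zet (n+1)) ^ (k+1))))
      = ∑ i ∈ Finset.range (n+1), (X : ℂ[X]) ^ i :=
    mul_right_cancel₀ (Polynomial.X_sub_C_ne_zero 1) (by simpa using hpoly)
  have h := congrArg (Polynomial.eval 1) hc
  simpa [Polynomial.eval_prod] using h

lemma exp_theta (θ : ℝ) :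
    Complex.exp ((θ:ℂ) * Complex.I) = (Real.cos θ : ℂ) + (Real.sin θ : ℂ) * Complex.I := by
  rw [Complex.exp_mul_I, Complex.ofReal_cos, Complex.ofReal_sin]

lemma exp_neg_theta (θ : ℝ) :
    Complex.exp (-(θ:ℂ) * Complex.I) = (Real.cos θ : ℂ) - (Real.sin θ : ℂ) * Complex.I := by
  have h := exp_theta (-θ)
  push_cast at h
  rw [h, Complex.cos_neg, Complex.sin_neg]
  rw [Complex.ofReal_cos, Complex.ofReal_sin]
  ring

lemma factor_eq (θ : ℝ) (z : ℂ) :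
    (Real.sin θ : ℂ) * z + (Real.cos θ : ℂ)
      = Complex.exp (-(θ:ℂ) * Complex.I) *
        ((1 + Complex.I * z)/2 + (1 - Complex.I * z)/2 * Complex.exp (2*(θ:ℂ)*Complex.I)) := by
  have h1 : Complex.exp (-(θ:ℂ) * Complex.I) * Complex.exp (2*(θ:ℂ)*Complex.I)
      = Complex.exp ((θ:ℂ) * Complex.I) := by
    rw [← Complex.exp_add]; ring_nf
  rw [mul_add, mul_comm ((1 - Complex.I * z)/2), ← mul_assoc, h1, exp_theta, exp_neg_theta]
  linear_combination ((Real.sin θ : ℂ) * z) * Complex.I_sq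

lemma sum_katy (n : ℕ) : ∑ k : Fin n, (((k:ℕ):ℂ) + 1) = n * (n+1) / 2 := by
  induction n with
  | zero => simp
  | succ n ih =>
    rw [Fin.sum_univ_castSucc]
    simp only [Fin.coe_castSucc]
    push_cast
    rw [ih]
    ring

lemma exp_prod (n : ℕ) :
    ∏ k : Fin n, Complex.exp (-(((((k:ℕ)+1) * Real.pi / (n+1) : ℝ)):ℂ) * Complex.I)
      = (-Complex.I)^n := by
  rw [← Complex.exp_sum]
  have hne : ((n:ℂ)+1) ≠ 0 := Nat.cast_add_one_ne_zero n
  have hsum : ∑ k : Fin n, (-(((((k:ℕ)+1) * Real.pi / (n+1) : ℝ)):ℂ) * Complex.I)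
      = (n:ℂ) * (((-(Real.pi/2)):ℝ) * Complex.I) := by
    have h1 : ∀ k : Fin n, (-(((((k:ℕ)+1) * Real.pi / (n+1) : ℝ)):ℂ) * Complex.I)
        = ((((k:ℕ):ℂ)+1)) * (-(Real.pi:ℂ)/((n:ℂ)+1) * Complex.I) := by
      intro k; push_cast; ring
    rw [Finset.sum_congr rfl (fun k _ => h1 k), ← Finset.sum_mul, sum_katy]
    push_cast
    field_simp
  rw [hsum, Complex.exp_nat_mul]
  congr 1
  rw [exp_theta (-(Real.pi/2))]
  simp

lemma zet_pow (n : ℕ) (k : ℕ) :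
    Complex.exp (2*((((k+1)*Real.pi/(n+1):ℝ)):ℂ)*Complex.I) = zet (n+1) ^ (k+1) := by
  rw [zet, ← Complex.exp_nat_mul]
  congr 1
  push_cast
  ring

lemma prod_closed (n : ℕ) (z : ℂ) :
    ∏ k : Fin n, ((Real.sin (((k:ℕ)+1)*Real.pi/(n+1)) : ℂ) * z
        + (Real.cos (((k:ℕ)+1)*Real.pi/(n+1)) : ℂ))
      = (-Complex.I)^n * (((1+Complex.I*z)/2)^(n+1) - ((Complex.I*z-1)/2)^(n+1)) := by
  have hfac : ∀ k : Fin n,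
      (Real.sin (((k:ℕ)+1)*Real.pi/(n+1)) : ℂ) * z + (Real.cos (((k:ℕ)+1)*Real.pi/(n+1)) : ℂ)
      = Complex.exp (-(((((k:ℕ)+1)*Real.pi/(n+1):ℝ)):ℂ) * Complex.I) *
          ((1 + Complex.I * z)/2 + (1 - Complex.I * z)/2 * zet (n+1) ^ ((k:ℕ)+1)) := by
    intro k
    rw [factor_eq, zet_pow]
  rw [Finset.prod_congr rfl (fun k _ => hfac k), Finset.prod_mul_distrib, exp_prod]
  congr 1
  have h := aux_AB (n+1) n.succ_pos ((1 - Complex.I * z)/2) ((1 + Complex.I * z)/2)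
  rw [Finset.prod_range_succ'] at h
  have h0 : (1 + Complex.I * z)/2 + (1 - Complex.I * z)/2 * zet (n+1) ^ 0 = 1 := by
    rw [pow_zero]; ring
  rw [h0, mul_one] at h
  rw [Fin.prod_univ_eq_prod_range
    (fun k => (1 + Complex.I * z)/2 + (1 - Complex.I * z)/2 * zet (n+1) ^ (k+1)) n]
  rw [h]
  ring_nf


lemma prod_sin_complex (n : ℕ) :
    ∏ k : Fin n, ((Real.sin (((k:ℕ)+1)*Real.pi/(n+1)) : ℂ)) = ((n:ℂ)+1)/2^n := by
  have hs : ∀ k : Fin n, (Real.sin (((k:ℕ)+1)*Real.pi/(n+1)) : ℂ) * (2*Complex.I)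
      = Complex.exp (-(((((k:ℕ)+1)*Real.pi/(n+1):ℝ)):ℂ) * Complex.I) *
          (zet (n+1) ^ ((k:ℕ)+1) - 1) := by
    intro k
    rw [← zet_pow n (k:ℕ), mul_sub,
      show Complex.exp (-(((((k:ℕ)+1)*Real.pi/(n+1):ℝ)):ℂ) * Complex.I) *
        Complex.exp (2*((((k:ℕ)+1)*Real.pi/(n+1):ℝ):ℂ)*Complex.I)
        = Complex.exp (((((k:ℕ)+1)*Real.pi/(n+1):ℝ):ℂ) * Complex.I) by
          rw [← Complex.exp_add]; ring_nf]
    rw [exp_theta, exp_neg_theta]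
    ring
  have hprod := Finset.prod_congr rfl (fun k (_ : k ∈ (Finset.univ : Finset (Fin n))) => hs k)
  rw [Finset.prod_mul_distrib, Finset.prod_const, Finset.prod_mul_distrib, exp_prod,
    Finset.card_univ, Fintype.card_fin] at hprod
  have hgeom : ∏ k : Fin n, (zet (n+1) ^ ((k:ℕ)+1) - 1) = (-1)^n * ((n:ℂ)+1) := by
    have h1 : ∀ k : Fin n, (zet (n+1) ^ ((k:ℕ)+1) - 1) = (-1) * (1 - zet (n+1) ^ ((k:ℕ)+1)) := by
      intro k; ring
    rw [Finset.prod_congr rfl (fun k _ => h1 k), Finset.prod_mul_distrib, Finset.prod_const,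
      Finset.card_univ, Fintype.card_fin,
      Fin.prod_univ_eq_prod_range (fun k => 1 - zet (n+1) ^ (k+1)) n, aux_geom]
  rw [hgeom] at hprod
  have hIn : (Complex.I)^n ≠ 0 := pow_ne_zero n Complex.I_ne_zero
  have h2n : ((2:ℂ))^n ≠ 0 := pow_ne_zero n two_ne_zero
  have hexp : ((2:ℂ)*Complex.I)^n = 2^n * Complex.I^n := mul_pow 2 Complex.I n
  have hneg : (-Complex.I)^n * ((-1:ℂ))^n = Complex.I^n := by
    rw [← mul_pow]; ring_nf
  have key : ((∏ k : Fin n, ((Real.sin (((k:ℕ)+1)*Real.pi/(n+1)) : ℂ))) * 2^n) * Complex.I^n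
      = ((n:ℂ)+1) * Complex.I^n := by
    linear_combination hprod
      - (∏ k : Fin n, ((Real.sin (((k:ℕ)+1)*Real.pi/(n+1)) : ℂ))) * hexp
      + ((n:ℂ)+1) * hneg
  rw [eq_div_iff h2n]
  exact mul_right_cancel₀ hIn key

lemma cot_sum (n : ℕ) :
    ∑ k : Fin n, (Real.cos (((k:ℕ)+1)*Real.pi/(n+1)) / Real.sin (((k:ℕ)+1)*Real.pi/(n+1))) = 0 := by
  set f : ℕ → ℝ := fun k => Real.cos ((k+1)*Real.pi/(n+1)) / Real.sin ((k+1)*Real.pi/(n+1)) with hf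
  have h0 : ∑ k : Fin n, (Real.cos (((k:ℕ)+1)*Real.pi/(n+1)) / Real.sin (((k:ℕ)+1)*Real.pi/(n+1)))
      = ∑ k ∈ Finset.range n, f k := by
    exact Fin.sum_univ_eq_sum_range (fun k => f k) n
  rw [h0]
  have hrefl := Finset.sum_range_reflect f n
  have hneg : ∀ k ∈ Finset.range n, f (n - 1 - k) = - f k := by
    intro k hk
    rw [Finset.mem_range] at hk
    have h1 : ((n - 1 - k : ℕ) : ℝ) + 1 = (n : ℝ) - k := by
      have : n - 1 - k + 1 = n - k := by omega
      rw [← Nat.cast_add_one, this]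
      push_cast [Nat.cast_sub hk.le]
      ring
    have h2 : (((n:ℝ) - k)) * Real.pi/(n+1) = Real.pi - ((k:ℝ)+1)*Real.pi/(n+1) := by
      have hne : ((n:ℝ)+1) ≠ 0 := by positivity
      field_simp
      ring
    simp only [hf, h1, h2, Real.cos_pi_sub, Real.sin_pi_sub]
    ring
  rw [Finset.sum_congr rfl hneg, Finset.sum_neg_distrib] at hrefl
  linarith

lemma deriv_lemma (n : ℕ) (z : ℂ)
    (hprod : ∀ w : ℂ, ∏ k : Fin n, ((Real.sin (((k:ℕ)+1)*Real.pi/(n+1)) : ℂ) * w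
        + (Real.cos (((k:ℕ)+1)*Real.pi/(n+1)) : ℂ))
      = (-Complex.I)^n * (((1+Complex.I*w)/2)^(n+1) - ((Complex.I*w-1)/2)^(n+1))) :
    ∑ k : Fin n, (∏ j ∈ Finset.univ.erase k, ((Real.sin (((j:ℕ)+1)*Real.pi/(n+1)) : ℂ) * z
        + (Real.cos (((j:ℕ)+1)*Real.pi/(n+1)) : ℂ))) * (Real.sin (((k:ℕ)+1)*Real.pi/(n+1)) : ℂ)
      = (-Complex.I)^n * (((n:ℂ)+1) * (Complex.I/2)
          * (((1+Complex.I*z)/2)^n - ((Complex.I*z-1)/2)^n)) := by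
  have h1 : HasDerivAt (fun w => ∏ k : Fin n, ((Real.sin (((k:ℕ)+1)*Real.pi/(n+1)) : ℂ) * w
        + (Real.cos (((k:ℕ)+1)*Real.pi/(n+1)) : ℂ)))
      (∑ k : Fin n, (∏ j ∈ Finset.univ.erase k, ((Real.sin (((j:ℕ)+1)*Real.pi/(n+1)) : ℂ) * z
        + (Real.cos (((j:ℕ)+1)*Real.pi/(n+1)) : ℂ))) • (Real.sin (((k:ℕ)+1)*Real.pi/(n+1)) : ℂ)) z := by
    refine HasDerivAt.fun_finsetProd (fun k _ => ?_)
    have := (((hasDerivAt_id z).const_mul ((Real.sin (((k:ℕ)+1)*Real.pi/(n+1)) : ℂ))).add_const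
      ((Real.cos (((k:ℕ)+1)*Real.pi/(n+1)) : ℂ)))
    simpa using this
  have hfun : (fun w => ∏ k : Fin n, ((Real.sin (((k:ℕ)+1)*Real.pi/(n+1)) : ℂ) * w
        + (Real.cos (((k:ℕ)+1)*Real.pi/(n+1)) : ℂ)))
      = fun w => (-Complex.I)^n * (((1+Complex.I*w)/2)^(n+1) - ((Complex.I*w-1)/2)^(n+1)) :=
    funext hprod
  rw [hfun] at h1
  have hB : HasDerivAt (fun w : ℂ => (1+Complex.I*w)/2) (Complex.I/2) z := by
    have := (((hasDerivAt_id z).const_mul Complex.I).const_add 1).div_const 2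
    simpa using this
  have hE : HasDerivAt (fun w : ℂ => (Complex.I*w-1)/2) (Complex.I/2) z := by
    have := (((hasDerivAt_id z).const_mul Complex.I).sub_const 1).div_const 2
    simpa using this
  have h3 := (((hB.pow (n+1)).sub (hE.pow (n+1))).const_mul ((-Complex.I)^n))
  simp only [Nat.add_sub_cancel] at h3
  have huniq := h1.unique h3
  simp only [smul_eq_mul] at huniq
  rw [huniq]
  push_cast
  ring

lemma per_term (s c z P : ℂ) (hs : s ≠ 0) (hsq : s^2 + c^2 = 1) :
    s⁻¹ * P = (z^2+1) * (P * s) + ((c/s) - z) * ((s*z+c)*P) := by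
  field_simp
  linear_combination (-P) * hsq

lemma key_identity (n : ℕ) (hn : 1 ≤ n) (z : ℂ) :
    (z - ((n:ℂ)+1)*Complex.I) * (∏ k : Fin n, ((Real.sin (((k:ℕ)+1)*Real.pi/(n+1)) : ℂ) * z
        + (Real.cos (((k:ℕ)+1)*Real.pi/(n+1)) : ℂ)))
      - ∑ k : Fin n, ((Real.sin (((k:ℕ)+1)*Real.pi/(n+1)) : ℂ))⁻¹ *
          ∏ j ∈ Finset.univ.erase k, ((Real.sin (((j:ℕ)+1)*Real.pi/(n+1)) : ℂ) * z
            + (Real.cos (((j:ℕ)+1)*Real.pi/(n+1)) : ℂ))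
    = (((n:ℂ)+1)/2^n) * (z - Complex.I)^(n+1) := by
  have hspos : ∀ k : Fin n, 0 < Real.sin (((k:ℕ)+1)*Real.pi/(n+1)) := by
    intro k
    apply Real.sin_pos_of_pos_of_lt_pi
    · positivity
    · rw [div_lt_iff₀ (by positivity)]
      have hk : ((k:ℕ):ℝ) + 1 < (n:ℝ) + 1 := by exact_mod_cast Nat.add_lt_add_right k.2 1
      nlinarith [Real.pi_pos]
  have hsne : ∀ k : Fin n, (Real.sin (((k:ℕ)+1)*Real.pi/(n+1)) : ℂ) ≠ 0 := fun k =>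
    Complex.ofReal_ne_zero.2 (hspos k).ne'
  -- per-term identity
  have hterm : ∀ k : Fin n,
      ((Real.sin (((k:ℕ)+1)*Real.pi/(n+1)) : ℂ))⁻¹ *
          ∏ j ∈ Finset.univ.erase k, ((Real.sin (((j:ℕ)+1)*Real.pi/(n+1)) : ℂ) * z
            + (Real.cos (((j:ℕ)+1)*Real.pi/(n+1)) : ℂ))
        = (z^2+1) * ((∏ j ∈ Finset.univ.erase k, ((Real.sin (((j:ℕ)+1)*Real.pi/(n+1)) : ℂ) * z
            + (Real.cos (((j:ℕ)+1)*Real.pi/(n+1)) : ℂ))) * (Real.sin (((k:ℕ)+1)*Real.pi/(n+1)) : ℂ))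
          + (((Real.cos (((k:ℕ)+1)*Real.pi/(n+1)) : ℂ) / (Real.sin (((k:ℕ)+1)*Real.pi/(n+1)) : ℂ)) - z)
            * (∏ j : Fin n, ((Real.sin (((j:ℕ)+1)*Real.pi/(n+1)) : ℂ) * z
              + (Real.cos (((j:ℕ)+1)*Real.pi/(n+1)) : ℂ))) := by
    intro k
    have hsq : (Real.sin (((k:ℕ)+1)*Real.pi/(n+1)) : ℂ)^2
        + (Real.cos (((k:ℕ)+1)*Real.pi/(n+1)) : ℂ)^2 = 1 := by
      rw [← Complex.ofReal_pow, ← Complex.ofReal_pow, ← Complex.ofReal_add,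
        Real.sin_sq_add_cos_sq, Complex.ofReal_one]
    have hH : (∏ j : Fin n, ((Real.sin (((j:ℕ)+1)*Real.pi/(n+1)) : ℂ) * z
          + (Real.cos (((j:ℕ)+1)*Real.pi/(n+1)) : ℂ)))
        = ((Real.sin (((k:ℕ)+1)*Real.pi/(n+1)) : ℂ) * z + (Real.cos (((k:ℕ)+1)*Real.pi/(n+1)) : ℂ))
          * ∏ j ∈ Finset.univ.erase k, ((Real.sin (((j:ℕ)+1)*Real.pi/(n+1)) : ℂ) * z
            + (Real.cos (((j:ℕ)+1)*Real.pi/(n+1)) : ℂ)) :=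
      (Finset.mul_prod_erase Finset.univ _ (Finset.mem_univ k)).symm
    rw [hH]
    exact per_term _ _ _ _ (hsne k) hsq
  rw [Finset.sum_congr rfl (fun k _ => hterm k), Finset.sum_add_distrib, ← Finset.mul_sum,
    ← Finset.sum_mul]
  have hcot : ∑ k : Fin n,
      (((Real.cos (((k:ℕ)+1)*Real.pi/(n+1)) : ℂ) / (Real.sin (((k:ℕ)+1)*Real.pi/(n+1)) : ℂ)) - z)
      = -((n:ℂ) * z) := by
    rw [Finset.sum_sub_distrib, Finset.sum_const, Finset.card_univ, Fintype.card_fin]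
    have h0 : ∑ k : Fin n,
        ((Real.cos (((k:ℕ)+1)*Real.pi/(n+1)) : ℂ) / (Real.sin (((k:ℕ)+1)*Real.pi/(n+1)) : ℂ)) = 0 := by
      have hc : (((∑ k : Fin n, (Real.cos (((k:ℕ)+1)*Real.pi/(n+1))
          / Real.sin (((k:ℕ)+1)*Real.pi/(n+1)))) : ℝ) : ℂ)
          = ∑ k : Fin n, ((Real.cos (((k:ℕ)+1)*Real.pi/(n+1)) : ℂ)
            / (Real.sin (((k:ℕ)+1)*Real.pi/(n+1)) : ℂ)) := by
        push_cast
        rfl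
      rw [← hc, cot_sum, Complex.ofReal_zero]
    rw [h0, nsmul_eq_mul]
    ring
  rw [hcot, deriv_lemma n z (prod_closed n), prod_closed n z]
  have h2n : ((2:ℂ))^n ≠ 0 := pow_ne_zero n two_ne_zero
  rw [div_mul_eq_mul_div, eq_div_iff h2n]
  have hzi : (z - Complex.I)^(n+1) = ((-2*Complex.I))^(n+1) * ((1+Complex.I*z)/2)^(n+1) := by
    rw [← mul_pow]
    congr 1
    linear_combination z * Complex.I_sq
  have hpow : (-2*Complex.I)^(n+1) = (-2*Complex.I) * ((-Complex.I)^n * 2^n) := by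
    rw [pow_succ, show ((-2:ℂ))*Complex.I = (-Complex.I)*2 by ring, mul_pow]
    ring
  rw [hzi, hpow, pow_succ ((1+Complex.I*z)/2) n, pow_succ ((Complex.I*z-1)/2) n]
  have h1 : (1+Complex.I*z)/2 * (z + Complex.I) = Complex.I*(z^2+1)/2 := by
    linear_combination (z/2) * Complex.I_sq
  have h2 : (Complex.I*z-1)/2 * (z - Complex.I) = Complex.I*(z^2+1)/2 := by
    linear_combination (-z/2) * Complex.I_sq
  linear_combination (((n:ℂ)+1) * ((-Complex.I)^n * 2^n) * ((1+Complex.I*z)/2)^n) * h1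
    - (((n:ℂ)+1) * ((-Complex.I)^n * 2^n) * ((Complex.I*z-1)/2)^n) * h2

lemma F1gen (s c t z r : ℂ) (hs : s ≠ 0) :
    (2*r + t*z) + (t*(c/s) - 2*r) = t * s⁻¹ * (s*z + c) := by
  field_simp
  ring

/-- with `a_k = (2 Im λ₀/(n+1)) csc(kπ/(n+1))`,
`b_k = (2 Im λ₀/(n+1)) cot(kπ/(n+1)) − 2 Re λ₀` and
`χ₀ = 2 Re λ₀ + 2i Im λ₀/(n+1)`, the characteristic polynomial
`P(χ) = (χ − 2λ₀ − Σ_k a_k²/(χ+b_k)) Π_k (χ+b_k)` equals `(χ − χ₀)^{n+1}`;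
in particular `χ₀` is a root of multiplicity `n+1`. -/
theorem characteristic_poly_multiple_root (n : ℕ) (hn : 1 ≤ n) (lam0 : ℂ)
    (him : lam0.im ≠ 0) (a b : Fin n → ℝ)
    (ha : ∀ k : Fin n, a k =
      2 * lam0.im / (n + 1) * (Real.sin (((k : ℕ) + 1) * Real.pi / (n + 1)))⁻¹)
    (hb : ∀ k : Fin n, b k =
      2 * lam0.im / (n + 1) *
          (Real.cos (((k : ℕ) + 1) * Real.pi / (n + 1)) /
            Real.sin (((k : ℕ) + 1) * Real.pi / (n + 1)))
        - 2 * lam0.re)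
    (chi0 : ℂ)
    (hchi0 : chi0 = 2 * (lam0.re : ℂ) + Complex.I * (2 * lam0.im / (n + 1))) :
    ∀ chi : ℂ, (∀ k : Fin n, chi + (b k : ℂ) ≠ 0) →
      (chi - 2 * lam0 - ∑ k : Fin n, ((a k : ℂ)) ^ 2 / (chi + (b k : ℂ))) *
          ∏ k : Fin n, (chi + (b k : ℂ))
        = (chi - chi0) ^ (n + 1) := by
  intro chi hden
  have hμC : (lam0.im : ℂ) ≠ 0 := Complex.ofReal_ne_zero.2 him
  have hm : ((n:ℂ)+1) ≠ 0 := Nat.cast_add_one_ne_zero n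
  have h2n : ((2:ℂ))^n ≠ 0 := pow_ne_zero n two_ne_zero
  obtain ⟨t, htdef⟩ : ∃ t : ℂ, t = 2*(lam0.im:ℂ)/((n:ℂ)+1) := ⟨_, rfl⟩
  have ht0 : t ≠ 0 := by
    rw [htdef]
    exact div_ne_zero (mul_ne_zero two_ne_zero hμC) hm
  obtain ⟨z, hchi⟩ : ∃ z : ℂ, chi = 2*(lam0.re:ℂ) + t*z :=
    ⟨(chi - 2*(lam0.re:ℂ))/t, by field_simp; ring⟩
  have hspos : ∀ k : Fin n, 0 < Real.sin (((k:ℕ)+1)*Real.pi/(n+1)) := by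
    intro k
    apply Real.sin_pos_of_pos_of_lt_pi
    · positivity
    · rw [div_lt_iff₀ (by positivity)]
      have hk : ((k:ℕ):ℝ) + 1 < (n:ℝ) + 1 := by exact_mod_cast Nat.add_lt_add_right k.2 1
      nlinarith [Real.pi_pos]
  have hsne : ∀ k : Fin n, (Real.sin (((k:ℕ)+1)*Real.pi/(n+1)) : ℂ) ≠ 0 := fun k =>
    Complex.ofReal_ne_zero.2 (hspos k).ne'
  have hbC : ∀ k : Fin n, ((b k : ℝ) : ℂ)
      = t * ((Real.cos (((k:ℕ)+1)*Real.pi/(n+1)) : ℂ) / (Real.sin (((k:ℕ)+1)*Real.pi/(n+1)) : ℂ))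
        - 2*(lam0.re:ℂ) := by
    intro k
    rw [hb k, htdef]
    push_cast
    ring
  have haC : ∀ k : Fin n, ((a k : ℝ):ℂ) = t * ((Real.sin (((k:ℕ)+1)*Real.pi/(n+1)) : ℂ))⁻¹ := by
    intro k
    rw [ha k, htdef]
    push_cast
    ring
  have hF1 : ∀ k : Fin n, chi + ((b k : ℝ):ℂ)
      = t * ((Real.sin (((k:ℕ)+1)*Real.pi/(n+1)) : ℂ))⁻¹ *
        ((Real.sin (((k:ℕ)+1)*Real.pi/(n+1)) : ℂ) * z + (Real.cos (((k:ℕ)+1)*Real.pi/(n+1)) : ℂ)) := by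
    intro k
    rw [hbC k, hchi]
    exact F1gen _ _ _ _ _ (hsne k)
  have hA : ∀ k : Fin n, ((a k:ℂ))^2 / (chi + ((b k:ℝ):ℂ)) * (∏ j : Fin n, (chi + ((b j:ℝ):ℂ)))
      = t^(n+1) * (∏ j : Fin n, ((Real.sin (((j:ℕ)+1)*Real.pi/(n+1)) : ℂ)))⁻¹ *
        (((Real.sin (((k:ℕ)+1)*Real.pi/(n+1)) : ℂ))⁻¹ *
          ∏ j ∈ Finset.univ.erase k, ((Real.sin (((j:ℕ)+1)*Real.pi/(n+1)) : ℂ) * z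
            + (Real.cos (((j:ℕ)+1)*Real.pi/(n+1)) : ℂ))) := by
    intro k
    have hEc : (Finset.univ.erase k).card = n - 1 := by
      rw [Finset.card_erase_of_mem (Finset.mem_univ k), Finset.card_univ, Fintype.card_fin]
    have hPb : (∏ j : Fin n, (chi + ((b j:ℝ):ℂ)))
        = (chi + ((b k:ℝ):ℂ)) * ∏ j ∈ Finset.univ.erase k, (chi + ((b j:ℝ):ℂ)) :=
      (Finset.mul_prod_erase _ _ (Finset.mem_univ k)).symm
    have hdiv : ((a k:ℂ))^2 / (chi + ((b k:ℝ):ℂ)) * (∏ j : Fin n, (chi + ((b j:ℝ):ℂ)))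
        = ((a k:ℂ))^2 * ∏ j ∈ Finset.univ.erase k, (chi + ((b j:ℝ):ℂ)) := by
      rw [hPb]
      field_simp [hden k]
    have hEprod : ∏ j ∈ Finset.univ.erase k, (chi + ((b j:ℝ):ℂ))
        = t^(n-1) * (∏ j ∈ Finset.univ.erase k, ((Real.sin (((j:ℕ)+1)*Real.pi/(n+1)) : ℂ))⁻¹) *
          ∏ j ∈ Finset.univ.erase k, ((Real.sin (((j:ℕ)+1)*Real.pi/(n+1)) : ℂ) * z
            + (Real.cos (((j:ℕ)+1)*Real.pi/(n+1)) : ℂ)) := by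
      rw [Finset.prod_congr rfl (fun j _ => hF1 j), Finset.prod_mul_distrib,
        Finset.prod_mul_distrib, Finset.prod_const, hEc]
    have hsplit : (∏ j : Fin n, ((Real.sin (((j:ℕ)+1)*Real.pi/(n+1)) : ℂ)))⁻¹
        = ((Real.sin (((k:ℕ)+1)*Real.pi/(n+1)) : ℂ))⁻¹ *
          ∏ j ∈ Finset.univ.erase k, ((Real.sin (((j:ℕ)+1)*Real.pi/(n+1)) : ℂ))⁻¹ := by
      rw [← Finset.mul_prod_erase Finset.univ _ (Finset.mem_univ k), mul_inv,
        Finset.prod_inv_distrib]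
    have htp : t^2 * t^(n-1) = t^(n+1) := by
      rw [← pow_add]
      congr 1
      omega
    rw [hdiv, hEprod, haC k, hsplit, mul_pow]
    linear_combination (((Real.sin (((k:ℕ)+1)*Real.pi/(n+1)) : ℂ))⁻¹^2 *
      (∏ j ∈ Finset.univ.erase k, ((Real.sin (((j:ℕ)+1)*Real.pi/(n+1)) : ℂ))⁻¹) *
      (∏ j ∈ Finset.univ.erase k, ((Real.sin (((j:ℕ)+1)*Real.pi/(n+1)) : ℂ) * z
        + (Real.cos (((j:ℕ)+1)*Real.pi/(n+1)) : ℂ)))) * htp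
  have hPb2 : (∏ j : Fin n, (chi + ((b j:ℝ):ℂ)))
      = t^n * (∏ j : Fin n, ((Real.sin (((j:ℕ)+1)*Real.pi/(n+1)) : ℂ)))⁻¹ *
        ∏ j : Fin n, ((Real.sin (((j:ℕ)+1)*Real.pi/(n+1)) : ℂ) * z
          + (Real.cos (((j:ℕ)+1)*Real.pi/(n+1)) : ℂ)) := by
    rw [Finset.prod_congr rfl (fun j _ => hF1 j), Finset.prod_mul_distrib,
      Finset.prod_mul_distrib, Finset.prod_const, Finset.card_univ, Fintype.card_fin,
      Finset.prod_inv_distrib]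
  have htm : t * ((n:ℂ)+1) = 2*(lam0.im:ℂ) := by
    rw [htdef]
    field_simp
  have hlam : chi - 2*lam0 = t * (z - ((n:ℂ)+1)*Complex.I) := by
    have hre : (lam0.re:ℂ) + (lam0.im:ℂ)*Complex.I = lam0 := Complex.re_add_im lam0
    linear_combination hchi + 2*hre + Complex.I*htm
  have hchi0d : chi - chi0 = t * (z - Complex.I) := by
    rw [hchi, hchi0, ← htdef]
    ring
  rw [sub_mul, Finset.sum_mul, Finset.sum_congr rfl (fun k _ => hA k), ← Finset.mul_sum]
  rw [hlam, hPb2, hchi0d, mul_pow]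
  have hkey := key_identity n hn z
  have hps := prod_sin_complex n
  have hpsne : (∏ j : Fin n, ((Real.sin (((j:ℕ)+1)*Real.pi/(n+1)) : ℂ))) ≠ 0 := by
    rw [hps]
    exact div_ne_zero hm h2n
  have hkey' : (z - ((n:ℂ)+1)*Complex.I) * (∏ k : Fin n, ((Real.sin (((k:ℕ)+1)*Real.pi/(n+1)) : ℂ) * z
        + (Real.cos (((k:ℕ)+1)*Real.pi/(n+1)) : ℂ)))
      - ∑ k : Fin n, ((Real.sin (((k:ℕ)+1)*Real.pi/(n+1)) : ℂ))⁻¹ *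
          ∏ j ∈ Finset.univ.erase k, ((Real.sin (((j:ℕ)+1)*Real.pi/(n+1)) : ℂ) * z
            + (Real.cos (((j:ℕ)+1)*Real.pi/(n+1)) : ℂ))
      = (∏ j : Fin n, ((Real.sin (((j:ℕ)+1)*Real.pi/(n+1)) : ℂ))) * (z - Complex.I)^(n+1) := by
    rw [hps]
    exact hkey
  have hmul : (∏ j : Fin n, ((Real.sin (((j:ℕ)+1)*Real.pi/(n+1)) : ℂ)))⁻¹ *
      (∏ j : Fin n, ((Real.sin (((j:ℕ)+1)*Real.pi/(n+1)) : ℂ))) = 1 := inv_mul_cancel₀ hpsne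
  linear_combination (t^(n+1) * (∏ j : Fin n, ((Real.sin (((j:ℕ)+1)*Real.pi/(n+1)) : ℂ)))⁻¹) * hkey'
    + (t^(n+1) * (z - Complex.I)^(n+1)) * hmul
end
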